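/- Let n be even and positive, and let A and B be submodules of V with finrank A = finrank B = n/2. Then for all s₁, s₁', s₂, s₂' ∈ V, the Hermitian inner product satisfies |⟨|A_{s₁,s₁'}⟩, |B_{s₂,s₂'}⟩⟩| ≤ 2^{finrank(A ⊓ B)} / 2^{n/2}, where A ⊓ B is the intersection submodule. -/

import Mathlib

open scoped BigOperators Kronecker Classical ComplexOrder

noncomputable section

/-- The vector space `F₂ⁿ`. -/
abbrev V (n : ℕ) : Type := Fin n → ZMod 2

/-- The standard bilinear pairing `⟨x,y⟩ = ∑ i, xᵢ * yᵢ` on `F₂ⁿ`. -/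
def pairing {n : ℕ} (x y : V n) : ZMod 2 := ∑ i, x i * y i

/-- `(−1)^b ∈ ℂ` for `b : ZMod 2`. -/
def sign (b : ZMod 2) : ℂ := if b = 0 then 1 else -1

lemma pairing_add_right {n : ℕ} (x y z : V n) :
    pairing x (y + z) = pairing x y + pairing x z := by
  simp [pairing, mul_add, Finset.sum_add_distrib]

lemma pairing_smul_right {n : ℕ} (c : ZMod 2) (x y : V n) :
    pairing x (c • y) = c * pairing x y := by
  simp only [pairing, Pi.smul_apply, smul_eq_mul, Finset.mul_sum]
  exact Finset.sum_congr rfl fun i _ => by ring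

/-- The orthogonal complement `A^⊥ = {y | ∀ a ∈ A, ⟨a,y⟩ = 0}`. -/
def perp {n : ℕ} (A : Submodule (ZMod 2) (V n)) : Submodule (ZMod 2) (V n) where
  carrier := {y | ∀ a ∈ A, pairing a y = 0}
  zero_mem' := by
    simp only [Set.mem_setOf_eq]
    intro a _
    simp [pairing]
  add_mem' := by
    intro y z hy hz
    simp only [Set.mem_setOf_eq] at *
    intro a ha
    rw [pairing_add_right, hy a ha, hz a ha, add_zero]
  smul_mem' := by
    intro c y hy
    simp only [Set.mem_setOf_eq] at *
    intro a ha
    rw [pairing_smul_right, hy a ha, mul_zero]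

/-- The coset `A + s = {a + s : a ∈ A}`. -/
def coset {n : ℕ} (A : Submodule (ZMod 2) (V n)) (s : V n) : Set (V n) :=
  {v | ∃ a ∈ A, v = a + s}

noncomputable instance {n : ℕ} (A : Submodule (ZMod 2) (V n)) : Fintype A :=
  Fintype.ofFinite _

/-- The coset state `|A_{s,s'}⟩ = |A|^{−1/2} ∑_{a ∈ A} (−1)^{⟨a,s'⟩} e_{a+s}`. -/
noncomputable def cosetState {n : ℕ} (A : Submodule (ZMod 2) (V n)) (s s' : V n) :
    EuclideanSpace ℂ (V n) :=
  ((Real.sqrt (Nat.card A) : ℂ))⁻¹ •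
    ∑ a : A, sign (pairing (a : V n) s') • EuclideanSpace.single ((a : V n) + s) (1 : ℂ)

/-- A family of orthogonal projections: each member is Hermitian and idempotent. -/
def IsProjFamily {ι m : Type*} [Fintype m] (P : ι → Matrix m m ℂ) : Prop :=
  ∀ p, (P p).IsHermitian ∧ P p * P p = P p

/-- Coset invariance of a family indexed by pairs `(s, s')`:
the value depends only on the pair of cosets `(A + s, A^⊥ + s')`. -/
def CosetInvariant {n : ℕ} {α : Type*} (A : Submodule (ZMod 2) (V n))
    (F : V n × V n → α) : Prop :=
  ∀ s₁ s₁' s₂ s₂' : V n, coset A s₁ = coset A s₂ →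
    coset (perp A) s₁' = coset (perp A) s₂' → F (s₁, s₁') = F (s₂, s₂')

/-- The rank-one matrix `|A_{s,s'}⟩⟨A_{s,s'}|`. -/
noncomputable def outer {n : ℕ} (A : Submodule (ZMod 2) (V n)) (s s' : V n) :
    Matrix (V n) (V n) ℂ :=
  Matrix.of fun x y => cosetState A s s' x * (starRingEnd ℂ) (cosetState A s s' y)

/-- `Π^A[P,Q] = 2^{−n} ∑_{s,s'} |A_{s,s'}⟩⟨A_{s,s'}| ⊗ P(s,s') ⊗ Q(s,s')`. -/
noncomputable def PiMat {n : ℕ} {I J : Type*} [Fintype I] [Fintype J]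
    (A : Submodule (ZMod 2) (V n)) (P : V n × V n → Matrix I I ℂ)
    (Q : V n × V n → Matrix J J ℂ) : Matrix (V n × I × J) (V n × I × J) ℂ :=
  ((2 : ℂ) ^ n)⁻¹ • ∑ s : V n, ∑ s' : V n, (outer A s s') ⊗ₖ (P (s, s') ⊗ₖ Q (s, s'))

/-- The `ℓ² → ℓ²` operator norm of a complex square matrix. -/
noncomputable def opNorm {m : Type*} [Fintype m] [DecidableEq m] (M : Matrix m m ℂ) : ℝ :=
  ‖Matrix.toEuclideanCLM (𝕜 := ℂ) M‖

section
variable {n : ℕ}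

lemma norm_sign (b : ZMod 2) : ‖sign b‖ = 1 := by
  unfold sign; split <;> simp

lemma add_self_V (v : V n) : v + v = 0 := by
  ext i; exact CharTwo.add_self_eq_zero _

lemma key_add (x y u : V n) : (x + u) + (y + u) = x + y := by
  rw [add_add_add_comm, add_self_V, add_zero]

lemma ncard_eq (C : Submodule (ZMod 2) (V n)) :
    Nat.card C = 2 ^ Module.finrank (ZMod 2) C := by
  have := Module.card_eq_pow_finrank (K := ZMod 2) (V := C)
  rw [ZMod.card] at this
  rw [Nat.card_eq_fintype_card]
  exact this

end

/-- The overlap of two coset states for `n/2`-dimensional subspaces `A`, `B` is bounded by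
`2^{dim(A ⊓ B)} / 2^{n/2}`. -/
theorem abs_inner_cosetState_le
    {n : ℕ} (hn : 0 < n) (hne : Even n)
    (A B : Submodule (ZMod 2) (V n))
    (hA : Module.finrank (ZMod 2) A = n / 2) (hB : Module.finrank (ZMod 2) B = n / 2)
    (s₁ s₁' s₂ s₂' : V n) :
    ‖(inner ℂ (cosetState A s₁ s₁') (cosetState B s₂ s₂') : ℂ)‖
      ≤ (2 : ℝ) ^ (Module.finrank (ZMod 2) ↥(A ⊓ B)) / (2 : ℝ) ^ (n / 2) := by
  classical
  set d := Module.finrank (ZMod 2) ↥(A ⊓ B) with hd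
  -- rewrite inner product
  have heq : (inner ℂ (cosetState A s₁ s₁') (cosetState B s₂ s₂') : ℂ)
      = ((Real.sqrt (Nat.card A) : ℂ))⁻¹ * ((Real.sqrt (Nat.card B) : ℂ))⁻¹ *
        ∑ x : B, ∑ y : A,
          ((starRingEnd ℂ) (sign (pairing (y : V n) s₁')) * sign (pairing (x : V n) s₂') *
            if (y : V n) + s₁ = (x : V n) + s₂ then 1 else 0) := by
    simp only [cosetState, inner_smul_left, inner_smul_right, sum_inner, inner_sum,
      EuclideanSpace.inner_single_left, EuclideanSpace.single_apply, map_inv₀,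
      Complex.conj_ofReal, map_one, one_mul, Finset.mul_sum]
    refine Finset.sum_congr rfl fun x _ => ?_
    refine Finset.sum_congr rfl fun y _ => ?_
    ring
  rw [heq]
  -- counting bound
  have hcount : ∑ x : B, ∑ y : A,
      (if (y : V n) + s₁ = (x : V n) + s₂ then (1 : ℝ) else 0) ≤ (2 : ℝ) ^ d := by
    rw [← Fintype.sum_prod_type']
    rw [Finset.sum_boole]
    set P : B × A → Prop := fun p => (p.2 : V n) + s₁ = (p.1 : V n) + s₂ with hP
    have hcard : (Finset.univ.filter P).card ≤ 2 ^ d := by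
      by_cases hF : (Finset.univ.filter P).Nonempty
      · obtain ⟨⟨b₀, a₀⟩, hmem⟩ := hF
        rw [Finset.mem_filter] at hmem
        have h₀ : (a₀ : V n) + s₁ = (b₀ : V n) + s₂ := hmem.2
        have hle : (Finset.univ.filter P).card ≤
            (Finset.univ.filter (fun v : V n => v ∈ A ⊓ B)).card := by
          refine Finset.card_le_card_of_injOn (fun p => (p.2 : V n) + (a₀ : V n)) ?_ ?_
          · intro p hp
            rw [Finset.mem_coe, Finset.mem_filter] at hp ⊢
            refine ⟨Finset.mem_univ _, ?_⟩
            have hpP : (p.2 : V n) + s₁ = (p.1 : V n) + s₂ := hp.2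
            have hmemB : (p.2 : V n) + (a₀ : V n) = (p.1 : V n) + (b₀ : V n) := by
              calc (p.2 : V n) + (a₀ : V n)
                  = ((p.2 : V n) + s₁) + ((a₀ : V n) + s₁) := (key_add _ _ _).symm
                _ = ((p.1 : V n) + s₂) + ((b₀ : V n) + s₂) := by rw [hpP, h₀]
                _ = (p.1 : V n) + (b₀ : V n) := key_add _ _ _
            refine Submodule.mem_inf.2 ⟨A.add_mem p.2.2 a₀.2, ?_⟩
            show (p.2 : V n) + (a₀ : V n) ∈ B
            rw [hmemB]; exact B.add_mem p.1.2 b₀.2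
          · intro p hp q hq hfq
            rw [Finset.coe_filter, Set.mem_setOf_eq] at hp hq
            have h2 : (p.2 : V n) = (q.2 : V n) := by
              have := add_right_cancel hfq
              exact this
            have h1 : (p.1 : V n) = (q.1 : V n) := by
              have : (p.1 : V n) + s₂ = (q.1 : V n) + s₂ := by
                rw [← hp.2, ← hq.2, h2]
              exact add_right_cancel this
            exact Prod.ext (Subtype.ext h1) (Subtype.ext h2)
        have hcardAB : (Finset.univ.filter (fun v : V n => v ∈ A ⊓ B)).card = 2 ^ d := by
          rw [← Fintype.card_subtype, ← Nat.card_eq_fintype_card, ncard_eq]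
        rw [hcardAB] at hle
        exact hle
      · rw [Finset.not_nonempty_iff_eq_empty] at hF
        simp [hF]
    calc ((Finset.univ.filter P).card : ℝ) ≤ ((2 ^ d : ℕ) : ℝ) := by exact_mod_cast hcard
      _ = (2 : ℝ) ^ d := by push_cast; ring
  -- norm bound
  have hS : ‖∑ x : B, ∑ y : A,
      ((starRingEnd ℂ) (sign (pairing (y : V n) s₁')) * sign (pairing (x : V n) s₂') *
        if (y : V n) + s₁ = (x : V n) + s₂ then (1:ℂ) else 0)‖ ≤ (2 : ℝ) ^ d := by
    refine le_trans (norm_sum_le _ _) (le_trans (Finset.sum_le_sum fun x _ =>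
      norm_sum_le _ _) ?_)
    refine le_trans (Finset.sum_le_sum fun x _ => Finset.sum_le_sum fun y _ => ?_) hcount
    rw [norm_mul, norm_mul, RCLike.norm_conj, norm_sign, norm_sign, one_mul, one_mul]
    split <;> simp
  -- cardinalities
  have hcardA : (Nat.card A : ℝ) = (2 : ℝ) ^ (n / 2) := by
    rw [ncard_eq A, hA]; push_cast; ring
  have hcardB : (Nat.card B : ℝ) = (2 : ℝ) ^ (n / 2) := by
    rw [ncard_eq B, hB]; push_cast; ring
  rw [norm_mul, norm_mul, norm_inv, norm_inv, Complex.norm_real, Complex.norm_real,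
    Real.norm_eq_abs, Real.norm_eq_abs, abs_of_nonneg (Real.sqrt_nonneg _),
    abs_of_nonneg (Real.sqrt_nonneg _), hcardA, hcardB]
  have hpos : (0:ℝ) < (2:ℝ) ^ (n/2) := by positivity
  have hsq : Real.sqrt ((2:ℝ) ^ (n/2)) * Real.sqrt ((2:ℝ) ^ (n/2)) = (2:ℝ) ^ (n/2) :=
    Real.mul_self_sqrt hpos.le
  calc (Real.sqrt ((2:ℝ) ^ (n/2)))⁻¹ * (Real.sqrt ((2:ℝ) ^ (n/2)))⁻¹ * ‖_‖
      ≤ (Real.sqrt ((2:ℝ) ^ (n/2)))⁻¹ * (Real.sqrt ((2:ℝ) ^ (n/2)))⁻¹ * (2:ℝ) ^ d := by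
        refine mul_le_mul_of_nonneg_left hS (by positivity)
    _ = (2 : ℝ) ^ d / (2 : ℝ) ^ (n / 2) := by
        rw [← mul_inv, hsq]; ring
end
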